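/- Let X be a variety over F_q of characteristic p and n < 0 an integer. Then the p-adic absolute value of the zeta value satisfies |ζ(X, n)|_p = 1. -/

import Mathlib

open PowerSeries

noncomputable def ZV.geo (d : ℕ) : PowerSeries ℚ := PowerSeries.mk fun n => if d ∣ n then 1 else 0
noncomputable def ZV.Mgeo (d : ℕ) : PowerSeries ℚ :=
  PowerSeries.mk fun k => if d ∣ k ∧ d ≤ k then (d : ℚ) else 0

lemma ZV.geo_inv {d : ℕ} (hd : 1 ≤ d) : (1 - X ^ d) * ZV.geo d = 1 := by
  ext n
  rw [sub_mul, one_mul, map_sub, coeff_X_pow_mul']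
  simp only [ZV.geo, coeff_mk, PowerSeries.coeff_one]
  rcases Nat.eq_zero_or_pos n with rfl | hn
  · have : ¬ d ≤ 0 := by omega
    simp [this]
  · rw [if_neg hn.ne']
    by_cases hdn : d ≤ n
    · have : d ∣ n ↔ d ∣ n - d := by
        constructor
        · intro h; exact Nat.dvd_sub h dvd_rfl
        · intro h; exact Nat.sub_add_cancel hdn ▸ Nat.dvd_add h dvd_rfl
      simp [hdn, this, -Nat.dvd_sub_self_right]
    · have : ¬ d ∣ n := fun h => hdn (Nat.le_of_dvd hn h)
      simp [hdn, this]

lemma ZV.Mgeo_eq {d : ℕ} (hd : 1 ≤ d) : ZV.Mgeo d = (d : ℚ) • (X ^ d * ZV.geo d) := by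
  ext k
  rw [map_smul, smul_eq_mul, coeff_X_pow_mul']
  simp only [ZV.Mgeo, ZV.geo, coeff_mk]
  by_cases hdk : d ≤ k
  · have : d ∣ k ↔ d ∣ k - d := by
      constructor
      · intro h; exact Nat.dvd_sub h dvd_rfl
      · intro h; exact Nat.sub_add_cancel hdk ▸ Nat.dvd_add h dvd_rfl
    by_cases hdvd : d ∣ k
    · simp [hdk, hdvd, this.mp hdvd]
    · simp [hdk, hdvd, mt this.mpr hdvd]
  · simp [hdk]

lemma ZV.geo_ode {d : ℕ} (hd : 1 ≤ d) :
    X * PowerSeries.derivative ℚ (ZV.geo d) = ZV.Mgeo d * ZV.geo d := by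
  have h1 := ZV.geo_inv hd
  have h2 := congrArg (PowerSeries.derivative ℚ) h1
  rw [Derivation.leibniz, Derivation.map_one_eq_zero] at h2
  have hX : PowerSeries.derivative ℚ (X ^ d : ℚ⟦X⟧) = (d : ℚ⟦X⟧) * X ^ (d - 1) := by
    rw [Derivation.leibniz_pow, PowerSeries.derivative_X, smul_eq_mul, mul_one, nsmul_eq_mul]
  have h3 : (1 - X ^ d) * PowerSeries.derivative ℚ (ZV.geo d)
      = ZV.geo d * ((d : ℚ⟦X⟧) * X ^ (d - 1)) := by
    have := h2
    rw [smul_eq_mul, smul_eq_mul, map_sub, Derivation.map_one_eq_zero, hX] at this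
    linear_combination this
  have hXd : (X : ℚ⟦X⟧) * X ^ (d - 1) = X ^ d := by
    conv_rhs => rw [show d = (d - 1) + 1 by omega]
    rw [pow_succ, mul_comm]
  have h4 : (1 - X ^ d) * (X * PowerSeries.derivative ℚ (ZV.geo d))
      = (1 - X ^ d) * (ZV.Mgeo d * ZV.geo d) := by
    rw [ZV.Mgeo_eq hd, smul_mul_assoc, smul_eq_C_mul]
    have : ((C) (d : ℚ)) = ((d : ℚ⟦X⟧)) := by
      simp [PowerSeries.C_eq_algebraMap]
    rw [this]
    calc (1 - X ^ d) * (X * PowerSeries.derivative ℚ (ZV.geo d))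
        = X * ((1 - X ^ d) * PowerSeries.derivative ℚ (ZV.geo d)) := by ring
      _ = X * (ZV.geo d * ((d : ℚ⟦X⟧) * X ^ (d - 1))) := by rw [h3]
      _ = (d : ℚ⟦X⟧) * (X * X ^ (d - 1)) * ZV.geo d := by ring
      _ = (d : ℚ⟦X⟧) * X ^ d * ZV.geo d := by rw [hXd]
      _ = (d : ℚ⟦X⟧) * X ^ d * ZV.geo d * ((1 - X ^ d) * ZV.geo d) := by
            rw [ZV.geo_inv hd, mul_one]
      _ = _ := by ring
  -- cancel the unit (1 - X^d)
  have hcancel := congrArg (fun t => ZV.geo d * t) h4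
  simpa [← mul_assoc, mul_comm (ZV.geo d) (1 - X ^ d), ZV.geo_inv hd] using hcancel

lemma ZV.ode_mul {A B mA mB : ℚ⟦X⟧}
    (hA : X * PowerSeries.derivative ℚ A = mA * A)
    (hB : X * PowerSeries.derivative ℚ B = mB * B) :
    X * PowerSeries.derivative ℚ (A * B) = (mA + mB) * (A * B) := by
  rw [Derivation.leibniz, smul_eq_mul, smul_eq_mul, mul_add]
  linear_combination A * hB + B * hA

lemma ZV.ode_pow {A mA : ℚ⟦X⟧} (hA : X * PowerSeries.derivative ℚ A = mA * A) (s : ℕ) :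
    X * PowerSeries.derivative ℚ (A ^ s) = (s • mA) * (A ^ s) := by
  induction s with
  | zero => simp
  | succ t ih =>
    rw [pow_succ]
    have := ZV.ode_mul ih hA
    rw [this, succ_nsmul]

lemma ZV.ode_prod (a : ℕ → ℕ) (s : Finset ℕ) (hs : ∀ d ∈ s, 1 ≤ d) :
    X * PowerSeries.derivative ℚ (∏ d ∈ s, ZV.geo d ^ a d)
      = (∑ d ∈ s, a d • ZV.Mgeo d) * (∏ d ∈ s, ZV.geo d ^ a d) := by
  classical
  induction s using Finset.induction_on with
  | empty => simp
  | insert x t hx ih =>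
    rw [Finset.prod_insert hx, Finset.sum_insert hx]
    have h1 := ZV.ode_pow (ZV.geo_ode (hs x (Finset.mem_insert_self x t))) (a x)
    have h2 := ih (fun d hd => hs d (Finset.mem_insert_of_mem hd))
    have := ZV.ode_mul h1 h2
    rw [this]

lemma ZV.ode_unique (M M' W W' : ℚ⟦X⟧)
    (hM0 : PowerSeries.coeff 0 M = 0) (hM'0 : PowerSeries.coeff 0 M' = 0)
    (K : ℕ) (hMM' : ∀ j ≤ K, PowerSeries.coeff j M = PowerSeries.coeff j M')
    (h0 : PowerSeries.coeff 0 W = PowerSeries.coeff 0 W')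
    (hW : X * PowerSeries.derivative ℚ W = M * W)
    (hW' : X * PowerSeries.derivative ℚ W' = M' * W') :
    ∀ k ≤ K, PowerSeries.coeff k W = PowerSeries.coeff k W' := by
  intro k
  induction k using Nat.strong_induction_on with
  | _ k ih =>
    intro hkK
    match k, hkK, ih with
    | 0, _, _ => exact h0
    | (m+1), hkK, ih =>
      have e1 := congrArg (PowerSeries.coeff (m+1)) hW
      have e2 := congrArg (PowerSeries.coeff (m+1)) hW'
      rw [coeff_succ_X_mul, PowerSeries.coeff_derivative, PowerSeries.coeff_mul] at e1 e2
      have hsum : ∑ x ∈ Finset.HasAntidiagonal.antidiagonal (m+1), coeff x.1 M * coeff x.2 W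
          = ∑ x ∈ Finset.HasAntidiagonal.antidiagonal (m+1), coeff x.1 M' * coeff x.2 W' := by
        apply Finset.sum_congr rfl
        rintro ⟨i, j⟩ hij
        rw [Finset.HasAntidiagonal.mem_antidiagonal] at hij
        rcases Nat.eq_zero_or_pos i with rfl | hi
        · simp only [hM0, hM'0, zero_mul]
        · have hj : j < m + 1 := by omega
          rw [hMM' i (by omega), ih j (by omega) (by omega)]
      have : PowerSeries.coeff (m+1) W * ((m:ℚ)+1) = PowerSeries.coeff (m+1) W' * ((m:ℚ)+1) := by
        push_cast at e1 e2 ⊢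
        rw [e1, e2, hsum]
      exact mul_right_cancel₀ (by positivity) this

noncomputable def ZV.geoN (d : ℕ) : PowerSeries ℕ := PowerSeries.mk fun n => if d ∣ n then 1 else 0

lemma ZV.map_geoN (d : ℕ) :
    PowerSeries.map (Nat.castRingHom ℚ) (ZV.geoN d) = ZV.geo d := by
  ext n
  rw [PowerSeries.coeff_map]
  simp [ZV.geoN, ZV.geo, apply_ite]

lemma ZV.coeff_prod_nat (a : ℕ → ℕ) (s : Finset ℕ) (k : ℕ) :
    PowerSeries.coeff k (∏ d ∈ s, ZV.geo d ^ a d)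
      = ((PowerSeries.coeff k (∏ d ∈ s, ZV.geoN d ^ a d) : ℕ) : ℚ) := by
  have : (∏ d ∈ s, ZV.geo d ^ a d)
      = PowerSeries.map (Nat.castRingHom ℚ) (∏ d ∈ s, ZV.geoN d ^ a d) := by
    rw [map_prod]
    exact Finset.prod_congr rfl fun d _ => by rw [map_pow, ZV.map_geoN]
  rw [this, PowerSeries.coeff_map]
  simp

lemma ZV.constantCoeff_prod (a : ℕ → ℕ) (s : Finset ℕ) :
    PowerSeries.coeff 0 (∏ d ∈ s, ZV.geo d ^ a d) = 1 := by
  rw [PowerSeries.coeff_zero_eq_constantCoeff, map_prod]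
  apply Finset.prod_eq_one
  intro d _
  rw [map_pow]
  have : PowerSeries.constantCoeff (ZV.geo d) = 1 := by simp [ZV.geo]
  rw [this, one_pow]

lemma ZV.coeff_Z_nat (a : ℕ → ℕ) (N : ℕ → ℕ)
    (hN : ∀ k, N k = ∑ d ∈ k.divisors, d * a d)
    (Z : PowerSeries ℚ) (hZ0 : PowerSeries.coeff 0 Z = 1)
    (hZ : X * PowerSeries.derivative ℚ Z = PowerSeries.mk (fun k => (N k : ℚ)) * Z) :
    ∀ k, ∃ m : ℕ, PowerSeries.coeff k Z = (m : ℚ) := by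
  intro K
  set s := Finset.Icc 1 K with hs
  have hODE := ZV.ode_prod a s (fun d hd => (Finset.mem_Icc.mp hd).1)
  have hcoeffsum : ∀ j : ℕ, PowerSeries.coeff j (∑ d ∈ s, a d • ZV.Mgeo d)
      = ∑ d ∈ s, a d • (if d ∣ j ∧ d ≤ j then (d : ℚ) else 0) := by
    intro j
    rw [map_sum]
    apply Finset.sum_congr rfl
    intro d _
    rw [map_nsmul]
    simp [ZV.Mgeo]
  have hM'0 : PowerSeries.coeff 0 (∑ d ∈ s, a d • ZV.Mgeo d) = 0 := by
    rw [hcoeffsum]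
    apply Finset.sum_eq_zero
    intro d hd
    have : 1 ≤ d := (Finset.mem_Icc.mp hd).1
    have : ¬ (d ∣ 0 ∧ d ≤ 0) := by omega
    rw [if_neg this, smul_zero]
  have hM0 : PowerSeries.coeff 0 (PowerSeries.mk fun k => (N k : ℚ)) = 0 := by
    simp [hN 0]
  have hagree : ∀ j ≤ K, PowerSeries.coeff j (PowerSeries.mk fun k => (N k : ℚ))
      = PowerSeries.coeff j (∑ d ∈ s, a d • ZV.Mgeo d) := by
    intro j hjK
    rcases Nat.eq_zero_or_pos j with rfl | hj
    · rw [hM0, hM'0]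
    · rw [hcoeffsum, PowerSeries.coeff_mk]
      have hsub : j.divisors ⊆ s := by
        intro d hd
        rw [Nat.mem_divisors] at hd
        rw [hs, Finset.mem_Icc]
        constructor
        · exact Nat.pos_of_dvd_of_pos hd.1 hj
        · exact le_trans (Nat.le_of_dvd hj hd.1) hjK
      rw [← Finset.sum_subset hsub]
      · rw [hN j]
        push_cast
        apply Finset.sum_congr rfl
        intro d hd
        rw [Nat.mem_divisors] at hd
        have h1 : d ∣ j ∧ d ≤ j := ⟨hd.1, Nat.le_of_dvd hj hd.1⟩
        rw [if_pos h1, nsmul_eq_mul]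
        ring
      · intro d _ hdnot
        have : ¬ (d ∣ j ∧ d ≤ j) := by
          intro h
          exact hdnot (Nat.mem_divisors.mpr ⟨h.1, hj.ne'⟩)
        rw [if_neg this, smul_zero]
  have h0 : PowerSeries.coeff 0 Z = PowerSeries.coeff 0 (∏ d ∈ s, ZV.geo d ^ a d) := by
    rw [hZ0, ZV.constantCoeff_prod]
  have := ZV.ode_unique _ _ Z (∏ d ∈ s, ZV.geo d ^ a d) hM0 hM'0 K hagree h0 hZ hODE K le_rfl
  refine ⟨PowerSeries.coeff K (∏ d ∈ s, ZV.geoN d ^ a d), ?_⟩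
  rw [this, ZV.coeff_prod_nat]

lemma ZV.padicNorm_pow (p : ℕ) [Fact p.Prime] (x : ℚ) (i : ℕ) :
    padicNorm p (x ^ i) = (padicNorm p x) ^ i := by
  induction i with
  | zero => simp [padicNorm.one]
  | succ j ih => rw [pow_succ, pow_succ, padicNorm.mul, ih]

lemma ZV.padic_eval (p : ℕ) (hp : p.Prime) (Z : PowerSeries ℚ)
    (hZ0 : PowerSeries.coeff 0 Z = 1)
    (hznat : ∀ k, ∃ m : ℕ, PowerSeries.coeff k Z = (m : ℚ))
    (cn : ℕ) (hpc : p ∣ cn) (hcn : cn ≠ 0)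
    (P Q : Polynomial ℚ) (hPQ : (P : ℚ⟦X⟧) = (Q : ℚ⟦X⟧) * Z) :
    padicValRat p (P.eval (cn : ℚ) / Q.eval (cn : ℚ)) = 0 := by
  haveI : Fact p.Prime := ⟨hp⟩
  set c : ℚ := (cn : ℚ) with hc
  by_cases hQc : Q.eval c = 0
  · rw [hQc, div_zero, padicValRat.zero]
  by_cases hPc : P.eval c = 0
  · rw [hPc, zero_div, padicValRat.zero]
  -- basic norms
  set ρ : ℚ := padicNorm p c with hρ
  have hρ1 : ρ < 1 := (padicNorm.nat_lt_one_iff cn).mpr hpc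
  have hρ0 : 0 ≤ ρ := padicNorm.nonneg c
  have hζ : ∀ k, padicNorm p (PowerSeries.coeff k Z) ≤ 1 := by
    intro k
    obtain ⟨m, hm⟩ := hznat k
    rw [hm]
    exact padicNorm.of_nat m
  set β : ℚ := padicNorm p (Q.eval c) with hβ
  have hβ0 : 0 < β := lt_of_le_of_ne (padicNorm.nonneg _) (Ne.symm (padicNorm.nonzero hQc))
  set CQ : ℚ := 1 + ∑ a ∈ Finset.range (Q.natDegree + 1), padicNorm p (Q.coeff a) with hCQ
  have hCQ1 : 1 ≤ CQ := by
    rw [hCQ]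
    have : 0 ≤ ∑ a ∈ Finset.range (Q.natDegree + 1), padicNorm p (Q.coeff a) :=
      Finset.sum_nonneg fun a _ => padicNorm.nonneg _
    linarith
  have hCQ0 : 0 < CQ := lt_of_lt_of_le one_pos hCQ1
  have hCQa : ∀ a, padicNorm p (Q.coeff a) ≤ CQ := by
    intro a
    by_cases ha : a ≤ Q.natDegree
    · have hmem : a ∈ Finset.range (Q.natDegree + 1) := Finset.mem_range.mpr (by omega)
      have := Finset.single_le_sum (f := fun a => padicNorm p (Q.coeff a))
        (fun b _ => padicNorm.nonneg _) hmem
      rw [hCQ]; linarith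
    · rw [Polynomial.coeff_eq_zero_of_natDegree_lt (by omega), padicNorm.zero]
      linarith
  -- choose K
  obtain ⟨n₀, hn₀⟩ := exists_pow_lt_of_lt_one (div_pos hβ0 hCQ0) hρ1
  set K : ℕ := max n₀ (max (P.natDegree + 1) 1) with hK
  have hK1 : 1 ≤ K := le_trans (le_max_right _ _) (le_max_right _ _)
  have hKP : P.natDegree < K := lt_of_lt_of_le (Nat.lt_succ_self _)
    (le_trans (le_max_left _ _) (le_max_right _ _))
  have hKn₀ : n₀ ≤ K := le_max_left _ _
  set T : Polynomial ℚ := Q * (PowerSeries.trunc K Z) - P with hT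
  have htrc : ∀ y, (PowerSeries.trunc K Z).coeff y = if y < K then PowerSeries.coeff y Z else 0 :=
    fun y => PowerSeries.coeff_trunc y K Z
  have htrnorm : ∀ y, padicNorm p ((PowerSeries.trunc K Z).coeff y) ≤ 1 := by
    intro y
    rw [htrc]
    split_ifs
    · exact hζ y
    · rw [padicNorm.zero]; exact zero_le_one
  have hT1 : ∀ i, i < K → T.coeff i = 0 := by
    intro i hi
    have h1 : (Q * (PowerSeries.trunc K Z)).coeff i
        = ∑ x ∈ Finset.HasAntidiagonal.antidiagonal i, Q.coeff x.1 * (PowerSeries.trunc K Z).coeff x.2 :=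
      Polynomial.coeff_mul _ _ _
    have h2 : P.coeff i = ∑ x ∈ Finset.HasAntidiagonal.antidiagonal i, Q.coeff x.1 * PowerSeries.coeff x.2 Z := by
      have := congrArg (PowerSeries.coeff i) hPQ
      rw [Polynomial.coeff_coe, PowerSeries.coeff_mul] at this
      rw [this]
      exact Finset.sum_congr rfl fun x _ => by rw [Polynomial.coeff_coe]
    rw [hT, Polynomial.coeff_sub, h1, h2, sub_eq_zero]
    apply Finset.sum_congr rfl
    rintro ⟨x, y⟩ hxy
    rw [Finset.HasAntidiagonal.mem_antidiagonal] at hxy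
    have : y < K := by omega
    rw [htrc, if_pos this]
  have hT2 : ∀ i, padicNorm p (T.coeff i) ≤ CQ := by
    intro i
    by_cases hi : i < K
    · rw [hT1 i hi, padicNorm.zero]; linarith
    · have hP0 : P.coeff i = 0 := Polynomial.coeff_eq_zero_of_natDegree_lt (by omega)
      rw [hT, Polynomial.coeff_sub, hP0, sub_zero, Polynomial.coeff_mul]
      apply padicNorm.sum_le' _ (le_of_lt hCQ0)
      rintro ⟨x, y⟩ _
      rw [padicNorm.mul]
      calc padicNorm p (Q.coeff x) * padicNorm p ((PowerSeries.trunc K Z).coeff y)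
          ≤ CQ * 1 := mul_le_mul (hCQa x) (htrnorm y) (padicNorm.nonneg _) (le_of_lt hCQ0)
        _ = CQ := mul_one _
  have hTev : padicNorm p (T.eval c) ≤ CQ * ρ ^ K := by
    rw [Polynomial.eval_eq_sum_range]
    apply padicNorm.sum_le' _ (by positivity)
    intro i _
    by_cases hi : i < K
    · rw [hT1 i hi, zero_mul, padicNorm.zero]; positivity
    · rw [padicNorm.mul, ZV.padicNorm_pow]
      calc padicNorm p (T.coeff i) * ρ ^ i ≤ CQ * ρ ^ i :=
            mul_le_mul_of_nonneg_right (hT2 i) (by positivity)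
        _ ≤ CQ * ρ ^ K := by
            apply mul_le_mul_of_nonneg_left _ (le_of_lt hCQ0)
            exact pow_le_pow_of_le_one hρ0 (le_of_lt hρ1) (by omega)
  set SK : ℚ := (PowerSeries.trunc K Z).eval c with hSKdef
  have hSKsub : padicNorm p (SK - 1) < 1 := by
    have heq : SK - 1 = ((PowerSeries.trunc K Z) - 1).eval c := by
      rw [Polynomial.eval_sub, Polynomial.eval_one]
    rw [heq, Polynomial.eval_eq_sum_range]
    refine lt_of_le_of_lt (padicNorm.sum_le' ?_ hρ0) hρ1
    intro i _
    rcases Nat.eq_zero_or_pos i with rfl | hi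
    · have h0 : ((PowerSeries.trunc K Z) - 1).coeff 0 = 0 := by
        rw [Polynomial.coeff_sub, Polynomial.coeff_one, htrc, if_pos (by omega), hZ0]
        simp
      rw [h0, zero_mul, padicNorm.zero]
      exact hρ0
    · have h0 : ((PowerSeries.trunc K Z) - 1).coeff i = (PowerSeries.trunc K Z).coeff i := by
        rw [Polynomial.coeff_sub, Polynomial.coeff_one, if_neg (by omega), sub_zero]
      rw [h0, padicNorm.mul, ZV.padicNorm_pow]
      calc padicNorm p ((PowerSeries.trunc K Z).coeff i) * ρ ^ i
          ≤ 1 * ρ ^ i := mul_le_mul_of_nonneg_right (htrnorm i) (by positivity)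
        _ = ρ ^ i := one_mul _
        _ ≤ ρ ^ 1 := pow_le_pow_of_le_one hρ0 (le_of_lt hρ1) hi
        _ = ρ := pow_one _
  have hSKnorm : padicNorm p SK = 1 := by
    have hne1 : padicNorm p (1:ℚ) ≠ padicNorm p (SK - 1) := by
      rw [padicNorm.one]
      exact ne_of_gt hSKsub
    have heq : SK = 1 + (SK - 1) := by ring
    rw [heq, padicNorm.add_eq_max_of_ne hne1, padicNorm.one]
    exact max_eq_left (le_of_lt hSKsub)
  have hEv : T.eval c = Q.eval c * SK - P.eval c := by
    rw [hT, Polynomial.eval_sub, Polynomial.eval_mul]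
  have hsmall : padicNorm p (T.eval c) < β := by
    calc padicNorm p (T.eval c) ≤ CQ * ρ ^ K := hTev
      _ ≤ CQ * ρ ^ n₀ := mul_le_mul_of_nonneg_left
          (pow_le_pow_of_le_one hρ0 (le_of_lt hρ1) hKn₀) (le_of_lt hCQ0)
      _ < CQ * (β / CQ) := by
          exact mul_lt_mul_of_pos_left hn₀ hCQ0
      _ = β := by field_simp
  have hPeval : padicNorm p (P.eval c) = β := by
    have heq : P.eval c = Q.eval c * SK + (-(T.eval c)) := by rw [hEv]; ring
    have hQS : padicNorm p (Q.eval c * SK) = β := by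
      rw [padicNorm.mul, hSKnorm, mul_one]
    have hTn : padicNorm p (-(T.eval c)) < β := by rw [padicNorm.neg]; exact hsmall
    have hne2 : padicNorm p (Q.eval c * SK) ≠ padicNorm p (-(Polynomial.eval c T)) := by
      rw [hQS]
      exact ne_of_gt hTn
    rw [heq, padicNorm.add_eq_max_of_ne hne2, hQS]
    exact max_eq_left (le_of_lt hTn)
  have hdiv : padicNorm p (P.eval c / Q.eval c) = 1 := by
    rw [padicNorm.div, hPeval]
    exact div_self (ne_of_gt hβ0)
  have hne : P.eval c / Q.eval c ≠ 0 := div_ne_zero hPc hQc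
  have hzp := padicNorm.eq_zpow_of_nonzero (p := p) hne
  rw [hdiv] at hzp
  have hp1 : (1:ℚ) < (p:ℚ) := by exact_mod_cast hp.one_lt
  have hfin := (zpow_eq_one_iff_right₀ (by positivity) (ne_of_gt hp1)).mp hzp.symm
  omega



open AlgebraicGeometry

/-!
STATEMENT 8. Let `X` be a variety over `𝔽_q` of characteristic `p` (so `q = p^e`) and
`n < 0` an integer.  Then the `p`-adic absolute value of the zeta value satisfies
`|ζ(X,n)|_p = 1`, i.e. `ζ(X,n)` is a `p`-adic unit.

As in Statement 7, the Hasse–Weil zeta function `Z(X,t)` is encoded as the formal power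
series `Z ∈ ℚ⟦t⟧` with `Z(0) = 1` and `t·Z' = (∑_{k≥1} N_k t^k)·Z`, where
`N_k = #X(𝔽_{q^k})` is computed from the closed points.  Since `ζ(X,n) = Z(X,q^{-n})`, for
any representation `Z = P/Q` by coprime polynomials with `Q(0) = 1` the statement reads
`v_p(P(q^{-n})/Q(q^{-n})) = 0`.
-/
theorem zeta_value_at_negative_integer_is_p_adic_unit
    (p : ℕ) (hp : p.Prime) (e : ℕ) (he : 1 ≤ e) (q : ℕ) (hq : q = p ^ e)
    (F : Type) [Field F] [Fintype F] (hF : Fintype.card F = q)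
    (X : Scheme) (f : X ⟶ Spec (CommRingCat.of F))
    [IsSeparated f] [LocallyOfFiniteType f] [QuasiCompact f]
    (N : ℕ → ℕ)
    (hN : ∀ k, N k = ∑ d ∈ k.divisors,
      d * Nat.card {x : X // IsClosed ({x} : Set X) ∧ Nat.card (X.residueField x) = q ^ d})
    (Z : PowerSeries ℚ) (hZ0 : PowerSeries.coeff 0 Z = 1)
    (hZ : PowerSeries.X * PowerSeries.derivative ℚ Z =
      PowerSeries.mk (fun k => (N k : ℚ)) * Z)
    (n : ℤ) (hn : n < 0) :
    ∀ P Q : Polynomial ℚ, IsCoprime P Q → Q.coeff 0 = 1 →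
      (P : PowerSeries ℚ) = (Q : PowerSeries ℚ) * Z →
      padicValRat p
        (Polynomial.eval ((q : ℚ) ^ (-n)) P / Polynomial.eval ((q : ℚ) ^ (-n)) Q) = 0 := by
  intro P Q _ _ hPQ
  have hznat := ZV.coeff_Z_nat
    (fun d => Nat.card {x : X // IsClosed ({x} : Set X) ∧ Nat.card (X.residueField x) = q ^ d})
    N hN Z hZ0 hZ
  set m : ℕ := (-n).toNat with hm
  have hm1 : 1 ≤ m := by omega
  set cn : ℕ := q ^ m with hcn
  have hpc : p ∣ cn := by
    rw [hcn, hq, ← pow_mul]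
    exact dvd_pow_self p (by positivity)
  have hcn0 : cn ≠ 0 := by
    have : p ≠ 0 := hp.pos.ne'
    rw [hcn, hq]
    positivity
  have hcast : (q : ℚ) ^ (-n) = ((cn : ℕ) : ℚ) := by
    have : -n = (m : ℤ) := by omega
    rw [this, hcn, zpow_natCast]
    push_cast
    ring
  rw [hcast]
  exact ZV.padic_eval p hp Z hZ0 hznat cn hpc hcn0 P Q hPQ
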